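/- For any finite tree T there is a bijection between E_pure(T), the set of legal subsets of E^3(T), and the set of pure 2-cycles c of the minority process on T with c(v*)=0, where the bijection sends a pure 2-cycle c to its set of multichromatic edges {(u,w) : c(u)≠c(w)}. -/

import Mathlib

open SimpleGraph Finset
open scoped Classical

variable {V : Type*}

/-- Number of neighbors of `v` with the same color as `v`. -/
noncomputable def sameCount (G : SimpleGraph V) [Fintype V] (c : V → Bool) (v : V) : ℕ :=
  ((G.neighborFinset v).filter fun u => c u = c v).card

/-- Number of neighbors of `v` with the opposite color. -/
noncomputable def diffCount (G : SimpleGraph V) [Fintype V] (c : V → Bool) (v : V) : ℕ :=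
  ((G.neighborFinset v).filter fun u => c u ≠ c v).card

/-- One round of the minority process. -/
noncomputable def minStep (G : SimpleGraph V) [Fintype V] (c : V → Bool) : V → Bool :=
  fun v => if sameCount G c v ≤ diffCount G c v then c v else !c v

/-- One round of the majority process. -/
noncomputable def majStep (G : SimpleGraph V) [Fintype V] (c : V → Bool) : V → Bool :=
  fun v => if diffCount G c v ≤ sameCount G c v then c v else !c v

/-- Number of edges of `F` incident to `v`. -/
noncomputable def incCount (F : Finset (Sym2 V)) (v : V) : ℕ :=
  (F.filter fun e => v ∈ e).card

/-- The monochromatic edges of a coloring. -/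
noncomputable def monoEdges (G : SimpleGraph V) [Fintype V] (c : V → Bool) : Finset (Sym2 V) :=
  G.edgeFinset.filter fun e => ∀ x ∈ e, ∀ y ∈ e, c x = c y

/-- The multichromatic edges of a coloring. -/
noncomputable def multiEdges (G : SimpleGraph V) [Fintype V] (c : V → Bool) : Finset (Sym2 V) :=
  G.edgeFinset.filter fun e => ∃ x ∈ e, ∃ y ∈ e, c x ≠ c y

/-- Edges of `G` both of whose endpoints have degree at least 3. -/
noncomputable def Ethree (G : SimpleGraph V) [Fintype V] : Finset (Sym2 V) :=
  G.edgeFinset.filter fun e => ∀ x ∈ e, 3 ≤ G.degree x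

/-- `F` is legal: `F ⊆ E³(T)` and `F_v < deg(v)/2` for every node. -/
def legalPure (G : SimpleGraph V) [Fintype V] (F : Finset (Sym2 V)) : Prop :=
  F ⊆ Ethree G ∧ ∀ v, 2 * incCount F v < G.degree v

section aux
variable [Fintype V] {G : SimpleGraph V}

lemma count_split (c : V → Bool) (v : V) :
    sameCount G c v + diffCount G c v = G.degree v := by
  classical
  rw [sameCount, diffCount, ← SimpleGraph.card_neighborFinset_eq_degree]
  exact Finset.card_filter_add_card_filter_not _

lemma incCount_eq (S : Finset (Sym2 V)) (hS : S ⊆ G.edgeFinset) (v : V) :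
    incCount S v = ((G.neighborFinset v).filter fun u => s(v,u) ∈ S).card := by
  classical
  rw [incCount, show (S.filter fun e => v ∈ e)
      = Finset.image (fun u => s(v,u)) ((G.neighborFinset v).filter fun u => s(v,u) ∈ S) from ?_]
  · rw [Finset.card_image_of_injOn]
    intro a _ b _ hab
    exact Sym2.congr_right.1 hab
  · ext e
    simp only [Finset.mem_filter, Finset.mem_image, SimpleGraph.mem_neighborFinset]
    constructor
    · rintro ⟨heS, hve⟩
      induction e with
      | _ x y =>
        have hadj : G.Adj x y := by
          have := hS heS; rwa [SimpleGraph.mem_edgeFinset, SimpleGraph.mem_edgeSet] at this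
        rcases Sym2.mem_iff.1 hve with rfl | rfl
        · exact ⟨y, ⟨hadj, heS⟩, rfl⟩
        · exact ⟨x, ⟨hadj.symm, by rwa [Sym2.eq_swap]⟩, Sym2.eq_swap⟩
    · rintro ⟨u, ⟨-, huS⟩, rfl⟩
      exact ⟨huS, Sym2.mem_mk_left v u⟩

lemma mem_multiEdges_iff {c : V → Bool} {u w : V} :
    s(u,w) ∈ multiEdges G c ↔ G.Adj u w ∧ c u ≠ c w := by
  simp only [multiEdges, Finset.mem_filter, SimpleGraph.mem_edgeFinset,
    SimpleGraph.mem_edgeSet, Sym2.mem_iff]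
  constructor
  · rintro ⟨hadj, x, (rfl|rfl), y, (rfl|rfl), hxy⟩ <;> simp_all <;> exact fun h => hxy h.symm
  · rintro ⟨hadj, hne⟩
    exact ⟨hadj, u, Or.inl rfl, w, Or.inr rfl, hne⟩

lemma diffCount_eq_incCount (c : V → Bool) (v : V) :
    diffCount G c v = incCount (multiEdges G c) v := by
  classical
  rw [incCount_eq (multiEdges G c) (by rw [multiEdges]; exact Finset.filter_subset _ _) v, diffCount]
  apply Finset.card_nbij id
  · intro u hu
    simp only [Finset.mem_coe, Finset.mem_filter, SimpleGraph.mem_neighborFinset] at hu ⊢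
    exact ⟨hu.1, mem_multiEdges_iff.2 ⟨hu.1, fun h => hu.2 (by simp [h])⟩⟩
  · exact Set.injOn_id _
  · intro u hu
    simp only [Finset.coe_filter, Set.mem_setOf_eq, SimpleGraph.mem_neighborFinset] at hu ⊢
    refine ⟨u, ⟨hu.1, ?_⟩, rfl⟩
    have := (mem_multiEdges_iff.1 hu.2).2
    exact fun h => this (by simp [h])

lemma mem_pureSet_iff (c : V → Bool) (vstar : V) :
    ((∀ v, minStep G c v ≠ c v) ∧ minStep G (minStep G c) = c ∧ c vstar = false)
    ↔ (∀ v, diffCount G c v < sameCount G c v) ∧ c vstar = false := by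
  constructor
  · rintro ⟨h1, -, h3⟩
    refine ⟨fun v => ?_, h3⟩
    by_contra hle
    exact h1 v (by rw [minStep, if_pos (not_lt.1 hle)])
  · rintro ⟨hd, h3⟩
    have hms : minStep G c = fun v => !c v := by
      funext v; rw [minStep, if_neg (not_le.2 (hd v))]
    refine ⟨fun v => by rw [hms]; exact Bool.not_ne_self (c v), ?_, h3⟩
    have hsame : ∀ v, sameCount G (fun x => !c x) v = sameCount G c v := by
      intro v; unfold sameCount; congr 1; apply Finset.filter_congr; intro u _; simp
    have hdiff : ∀ v, diffCount G (fun x => !c x) v = diffCount G c v := by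
      intro v; unfold diffCount; congr 1; apply Finset.filter_congr; intro u _; simp
    funext v
    rw [hms, minStep]
    simp only [hsame, hdiff]
    rw [if_neg (not_le.2 (hd v)), Bool.not_not]
end aux

section main
variable [Fintype V] {G : SimpleGraph V}

lemma multiEdges_subset_Ethree {c : V → Bool} (hd : ∀ v, diffCount G c v < sameCount G c v) :
    multiEdges G c ⊆ Ethree G := by
  intro e he
  have he' := he
  rw [multiEdges, Finset.mem_filter] at he'
  rw [Ethree, Finset.mem_filter]
  refine ⟨he'.1, ?_⟩
  intro x hx
  induction e with
  | _ a b =>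
    have hadj : G.Adj a b := by
      have := he'.1; rwa [SimpleGraph.mem_edgeFinset, SimpleGraph.mem_edgeSet] at this
    have hab : c a ≠ c b := by
      obtain ⟨-, p, hp, q, hq, hpq⟩ := he'
      rcases Sym2.mem_iff.1 hp with rfl | rfl <;> rcases Sym2.mem_iff.1 hq with rfl | rfl <;>
        first | exact hpq | exact fun h => hpq h.symm | exact absurd rfl hpq
    -- x is an endpoint; the other endpoint is a differently colored neighbor
    have hdx : 1 ≤ diffCount G c x := by
      rcases Sym2.mem_iff.1 hx with rfl | rfl
      · rw [diffCount]
        refine Finset.card_pos.2 ⟨b, ?_⟩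
        simp only [Finset.mem_filter, SimpleGraph.mem_neighborFinset]
        exact ⟨hadj, fun h => hab h.symm⟩
      · rw [diffCount]
        refine Finset.card_pos.2 ⟨a, ?_⟩
        simp only [Finset.mem_filter, SimpleGraph.mem_neighborFinset]
        exact ⟨hadj.symm, hab⟩
    have := hd x
    have := count_split (G := G) c x
    omega

lemma mapsTo_part {c : V → Bool} (hd : ∀ v, diffCount G c v < sameCount G c v)
    (hF : F = multiEdges G c) : F ⊆ Ethree G ∧ ∀ v, 2 * incCount F v < G.degree v := by
  subst hF
  refine ⟨multiEdges_subset_Ethree hd, fun v => ?_⟩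
  rw [← diffCount_eq_incCount]
  have := hd v
  have := count_split (G := G) c v
  omega
end main

lemma exists_coloring [Fintype V] {G : SimpleGraph V} (hT : G.IsTree) (vstar : V)
    (F : Finset (Sym2 V)) (hFE : F ⊆ G.edgeFinset) :
    ∃ c : V → Bool, c vstar = false ∧ multiEdges G c = F := by
  classical
  choose path hpath hpathu using hT.existsUnique_path
  set cnt : V → ℕ := fun v => ((path vstar v).edges.countP (fun e => decide (e ∈ F))) with hcnt
  set c : V → Bool := fun v => decide (cnt v % 2 = 1) with hc
  have key : ∀ (m n : ℕ) (P : Prop) [Decidable P], (n = m + (if P then 1 else 0)) →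
      (decide (n % 2 = 1) = xor (decide (m % 2 = 1)) (decide P)) := by
    intro m n P _ hmn
    by_cases hP : P
    · rw [decide_eq_true hP, Bool.xor_true, ← decide_not, decide_eq_decide]
      rw [if_pos hP] at hmn; omega
    · rw [decide_eq_false hP, Bool.xor_false, decide_eq_decide]
      rw [if_neg hP] at hmn; omega
  have step : ∀ u w, G.Adj u w → (c w = xor (c u) (decide (s(u,w) ∈ F))) := by
    intro u w h
    by_cases hw : w ∈ (path vstar u).support
    · have hq : (path vstar u).takeUntil w hw = path vstar w :=
        hpathu _ _ _ ((hpath vstar u).takeUntil hw)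
      have hsingle : (SimpleGraph.Walk.cons h.symm SimpleGraph.Walk.nil).IsPath :=
        SimpleGraph.Walk.IsPath.nil.cons (by simp [h.ne'])
      have hr : (path vstar u).dropUntil w hw = SimpleGraph.Walk.cons h.symm SimpleGraph.Walk.nil := by
        rw [hpathu _ _ _ ((hpath vstar u).dropUntil hw), hpathu _ _ _ hsingle]
      have hsplit := (path vstar u).take_spec hw
      have hedges : (path vstar u).edges = (path vstar w).edges ++ [s(w,u)] := by
        conv_lhs => rw [← hsplit]
        rw [SimpleGraph.Walk.edges_append, hq, hr]
        simp
      have hcnteq : cnt u = cnt w + (if s(u,w) ∈ F then 1 else 0) := by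
        rw [hcnt]
        simp only [hedges, List.countP_append, List.countP_cons, List.countP_nil]
        rw [Sym2.eq_swap (a := w) (b := u)]
        by_cases hf : s(u,w) ∈ F <;> simp [hf]
      have hk := key (cnt w) (cnt u) _ hcnteq
      have hk' : c u = xor (c w) (decide (s(u,w) ∈ F)) := hk
      rw [hk', Bool.xor_assoc, Bool.xor_self, Bool.xor_false]
    · have hq : (path vstar u).concat h = path vstar w := by
        apply hpathu
        rw [← SimpleGraph.Walk.isPath_reverse_iff, SimpleGraph.Walk.reverse_concat]
        exact (hpath vstar u).reverse.cons (by simpa using hw)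
      have hedges : (path vstar w).edges = (path vstar u).edges ++ [s(u,w)] := by
        rw [← hq, SimpleGraph.Walk.edges_concat, List.concat_eq_append]
      have hcnteq : cnt w = cnt u + (if s(u,w) ∈ F then 1 else 0) := by
        rw [hcnt]
        simp only [hedges, List.countP_append, List.countP_cons, List.countP_nil]
        by_cases hf : s(u,w) ∈ F <;> simp [hf]
      have hk := key (cnt u) (cnt w) _ hcnteq
      exact hk
  refine ⟨c, ?_, ?_⟩
  · have hnil : (SimpleGraph.Walk.nil : G.Walk vstar vstar) = path vstar vstar :=
      hpathu _ _ _ SimpleGraph.Walk.IsPath.nil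
    rw [hc]
    simp [hcnt, ← hnil]
  · ext e
    induction e with
    | _ x y =>
      rw [mem_multiEdges_iff]
      constructor
      · rintro ⟨hadj, hne⟩
        have := step x y hadj
        by_contra hf
        rw [decide_eq_false hf] at this
        simp at this
        exact hne this.symm
      · intro hf
        have hadj : G.Adj x y := by
          have := hFE hf; rwa [SimpleGraph.mem_edgeFinset, SimpleGraph.mem_edgeSet] at this
        refine ⟨hadj, ?_⟩
        have := step x y hadj
        rw [decide_eq_true hf] at this
        simp only [Bool.xor_true] at this
        simp [this]

lemma bool_step {a b a' b' : Bool} (h : a = a') (hiff : (a = b ↔ a' = b')) : b = b' := by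
  cases a <;> cases b <;> cases a' <;> cases b' <;> simp_all


theorem stmt15 [Fintype V] (G : SimpleGraph V) (hT : G.IsTree) (vstar : V) :
    Set.BijOn (fun c => multiEdges G c)
      {c : V → Bool | (∀ v, minStep G c v ≠ c v) ∧ minStep G (minStep G c) = c ∧
        c vstar = false}
      {F | legalPure G F} := by
  refine ⟨?_, ?_, ?_⟩
  · intro c hc
    obtain ⟨hd, -⟩ := (mem_pureSet_iff c vstar).1 hc
    exact mapsTo_part hd rfl
  · intro c1 hc1 c2 hc2 hme
    obtain ⟨hd1, h1s⟩ := (mem_pureSet_iff c1 vstar).1 hc1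
    obtain ⟨hd2, h2s⟩ := (mem_pureSet_iff c2 vstar).1 hc2
    simp only at hme
    have hiff : ∀ u w, G.Adj u w → (c1 u = c1 w ↔ c2 u = c2 w) := by
      intro u w h
      have hmm := (Finset.ext_iff.1 hme s(u,w))
      rw [mem_multiEdges_iff, mem_multiEdges_iff] at hmm
      constructor
      · intro he
        by_contra hne
        exact (hmm.2 ⟨h, hne⟩).2 he
      · intro he
        by_contra hne
        exact (hmm.1 ⟨h, hne⟩).2 he
    funext v
    have hwalk : ∀ (a b : V) (p : G.Walk a b), c1 a = c2 a → c1 b = c2 b := by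
      intro a b p
      induction p with
      | nil => exact id
      | cons hadj q ih => exact fun hab => ih (bool_step hab (hiff _ _ hadj))
    obtain ⟨p⟩ := hT.isConnected.preconnected vstar v
    exact hwalk vstar v p (by rw [h1s, h2s])
  · intro F hF
    have hFE : F ⊆ G.edgeFinset := by
      intro e he
      have := hF.1 he
      rw [Ethree, Finset.mem_filter] at this
      exact this.1
    obtain ⟨c, hcs, hcm⟩ := exists_coloring hT vstar F hFE
    have hd : ∀ v, diffCount G c v < sameCount G c v := by
      intro v
      have h1 := diffCount_eq_incCount (G := G) c v
      rw [hcm] at h1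
      have h2 := hF.2 v
      have h3 := count_split (G := G) c v
      omega
    exact ⟨c, (mem_pureSet_iff c vstar).2 ⟨hd, hcs⟩, hcm⟩
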